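/- Any set-theoretic substitution ρ: S → S^+ of bounded length on an arbitrary set S extends to a continuous substitution on a compact Hausdorff alphabet: there is a compact Hausdorff space A, a dense embedding ι: S ↪ A onto the set of isolated points of A, and a continuous ρ̄: A → A^+ with ρ̄(ι a) = ι ρ(a) for all a ∈ S. -/
import Mathlib


open Filter Topology

/-- The left shift on bi-infinite sequences. -/
def shift {A : Type*} (w : ℤ → A) : ℤ → A := fun i => w (i + 1)

/-- The finite subword of `w` of length `n` starting at position `j`. -/
def word {A : Type*} (w : ℤ → A) (j : ℤ) (n : ℕ) : List A :=
  (List.range n).map fun i => w (j + (i : ℤ))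

/-- The subshift determined by a language `L ⊆ A*`. -/
def subshiftOf {A : Type*} (L : Set (List A)) : Set (ℤ → A) :=
  {w | ∀ (j : ℤ) (n : ℕ), word w j n ∈ L}

/-- The set of finite subwords of a bi-infinite sequence. -/
def subwordsOf {A : Type*} (w : ℤ → A) : Set (List A) :=
  {u | ∃ (j : ℤ) (n : ℕ), u = word w j n}

/-- The language of a bi-infinite sequence: the closure of its set of finite subwords. -/
def langOfSeq {A : Type*} [TopologicalSpace A] (w : ℤ → A) : Set (List A) :=
  closure (subwordsOf w)

/-- The shift orbit of a bi-infinite sequence. -/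
def orbit {A : Type*} (w : ℤ → A) : Set (ℤ → A) :=
  {x | ∃ k : ℤ, x = fun i => w (i + k)}

/-- Application of a substitution to a finite word, by concatenation. -/
def substWord {A : Type*} (ρ : A → List A) (u : List A) : List A := u.flatMap ρ

/-- The `n`-th iterated substitute (level-`n` supertile) of a letter. -/
def substIter {A : Type*} (ρ : A → List A) (n : ℕ) (a : A) : List A :=
  (substWord ρ)^[n] [a]

/-- The language of a substitution: closure of the set of words generated by `ρ`. -/
def lang {A : Type*} [TopologicalSpace A] (ρ : A → List A) : Set (List A) :=
  closure {u : List A | ∃ (a : A) (k : ℕ), u <:+: substIter ρ k a}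

/-- The legal `n`-letter words of a substitution. -/
def langN {A : Type*} [TopologicalSpace A] (ρ : A → List A) (n : ℕ) : Set (List A) :=
  closure {u : List A | u.length = n ∧ ∃ (a : A) (k : ℕ), u <:+: substIter ρ k a}

/-- Primitivity of a substitution on a topological alphabet. -/
def Primitive {A : Type*} [TopologicalSpace A] (ρ : A → List A) : Prop :=
  ∀ U : Set A, IsOpen U → U.Nonempty → ∃ p : ℕ, ∀ a : A, ∃ b ∈ substIter ρ p a, b ∈ U

/-- `y` is the image of the bi-infinite sequence `w` under the substitution `ρ`,
with the image of `w 0` starting at position `0`. -/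
def IsSubstOf {A : Type*} (ρ : A → List A) (w y : ℤ → A) : Prop :=
  ∃ o : ℤ → ℤ, o 0 = 0 ∧ (∀ k : ℤ, o (k + 1) = o k + (ρ (w k)).length) ∧
    ∀ (k : ℤ) (i : ℕ) (h : i < (ρ (w k)).length), y (o k + (i : ℤ)) = (ρ (w k)).get ⟨i, h⟩

universe u

lemma continuous_listOfFn {B : Type*} [TopologicalSpace B] (n : ℕ) :
    Continuous (List.ofFn : (Fin n → B) → List B) := by
  induction n with
  | zero =>
      have : (List.ofFn : (Fin 0 → B) → List B) = fun _ => [] := by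
        funext v; simp
      rw [this]; exact continuous_const
  | succ n ih =>
      have h : (List.ofFn : (Fin (n + 1) → B) → List B)
          = fun v => v 0 :: List.ofFn (fun i : Fin n => v i.succ) := by
        funext v; rw [List.ofFn_succ]
      rw [h]
      exact List.continuous_cons.comp
        ((continuous_apply 0).prodMk
          (ih.comp (continuous_pi fun i => continuous_apply i.succ)))



/-- Any set-theoretic substitution of bounded length on a discrete set `S` extends to a
continuous substitution on a compact Hausdorff alphabet in which `S` embeds densely as the
set of isolated points. -/
theorem stmt15 {S : Type u} (ρ : S → List S) (L : ℕ)
    (h1 : ∀ s : S, 1 ≤ (ρ s).length) (hL : ∀ s : S, (ρ s).length ≤ L) :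
    ∃ (A : Type u) (tA : TopologicalSpace A) (ι : S → A) (ρb : A → List A),
      @CompactSpace A tA ∧ @T2Space A tA ∧ Function.Injective ι ∧
      @DenseRange A tA S ι ∧
      Set.range ι = {a : A | @IsOpen A tA {a}} ∧
      @Continuous A (List A) tA (@instTopologicalSpaceList A tA) ρb ∧
      (∀ s : S, ρb (ι s) = (ρ s).map ι) ∧
      ∀ a : A, 1 ≤ (ρb a).length ∧ (ρb a).length ≤ L := by
  classical
  letI tS : TopologicalSpace S := ⊥
  haveI hdS : DiscreteTopology S := ⟨rfl⟩
  rcases isEmpty_or_nonempty S with hS | hS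
  · -- empty case: A = S itself
    refine ⟨S, tS, id, fun a => [a], Finite.compactSpace, inferInstance,
      fun a b h => h, denseRange_id, ?_, continuous_of_discreteTopology,
      fun s => hS.elim s, fun a => hS.elim a⟩
    ext a; exact hS.elim a
  · -- nonempty case: A = Stone–Čech compactification of discrete S
    obtain ⟨s0⟩ := hS
    have hL1 : 1 ≤ L := le_trans (h1 s0) (hL s0)
    set A := StoneCech S with hA
    set ι : S → A := stoneCechUnit with hι
    set f : S → (Fin L → A) × Fin L := fun s =>
      (fun i => ι ((ρ s).getD i s), ⟨(ρ s).length - 1, by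
        have := h1 s; have := hL s; omega⟩) with hf
    have hfc : Continuous f := continuous_of_discreteTopology
    set F : A → (Fin L → A) × Fin L := stoneCechExtend hfc with hF
    have hFext : ∀ s : S, F (ι s) = f s := fun s =>
      congrFun (stoneCechExtend_extends hfc) s
    set u : Fin L → (Fin L → A) → List A := fun n v =>
      List.ofFn (fun i : Fin (n.1 + 1) => v (Fin.castLE n.2 i)) with hu
    have huc : ∀ n : Fin L, Continuous (u n) := fun n =>
      (continuous_listOfFn _).comp
        (continuous_pi fun i => continuous_apply (Fin.castLE n.2 i))
    set ρb : A → List A := fun a => u (F a).2 (F a).1 with hρb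
    have hρbc : Continuous ρb := by
      rw [continuous_iff_continuousAt]
      intro a
      have hFc : Continuous F := continuous_stoneCechExtend hfc
      have hsnd : ContinuousAt (fun x => (F x).2) a := (continuous_snd.comp hFc).continuousAt
      have hev : ∀ᶠ x in 𝓝 a, (F x).2 = (F a).2 := by
        have hm : {(F a).2} ∈ 𝓝 ((F a).2) := by simp [nhds_discrete]
        filter_upwards [hsnd hm] with x hx using hx
      have hcongr : ρb =ᶠ[𝓝 a] fun x => u (F a).2 (F x).1 := by
        filter_upwards [hev] with x hx
        simp only [hρb, hx]
      refine ContinuousAt.congr ?_ hcongr.symm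
      exact ((huc _).comp (continuous_fst.comp hFc)).continuousAt
    have hopen : ∀ s : S, IsOpen ({ι s} : Set A) := by
      intro s
      set χ : S → Bool := fun t => decide (t = s) with hχ
      have hχc : Continuous χ := continuous_of_discreteTopology
      set g : A → Bool := stoneCechExtend hχc with hg
      have hgc : Continuous g := continuous_stoneCechExtend hχc
      have hgext : ∀ t : S, g (ι t) = χ t := fun t =>
        congrFun (stoneCechExtend_extends hχc) t
      have hU : IsOpen (g ⁻¹' {true}) := hgc.isOpen_preimage _ (isOpen_discrete _)
      have hsub : g ⁻¹' {true} ⊆ {ι s} := by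
        intro a ha
        by_contra hne
        have hUopen : IsOpen (g ⁻¹' {true} \ {ι s}) := hU.sdiff isClosed_singleton
        have hne' : (g ⁻¹' {true} \ {ι s}).Nonempty := ⟨a, ha, hne⟩
        obtain ⟨t, hbU⟩ := denseRange_stoneCechUnit.exists_mem_open hUopen hne'
        have h3 : g (ι t) = true := hbU.1
        rw [hgext] at h3
        have h4 : t = s := by simpa [hχ] using h3
        exact hbU.2 (by rw [h4]; rfl)
      have hmem : ι s ∈ g ⁻¹' {true} := by
        simp only [Set.mem_preimage, hgext, hχ, Set.mem_singleton_iff, decide_eq_true_eq]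
      have heq : ({ι s} : Set A) = g ⁻¹' {true} :=
        le_antisymm (by simpa [Set.singleton_subset_iff] using hmem) hsub
      rw [heq]; exact hU
    have hinj : Function.Injective ι := by
      intro s t h
      by_contra hne
      set χ : S → Bool := fun r => decide (r = s) with hχ
      have hχc : Continuous χ := continuous_of_discreteTopology
      have he1 : stoneCechExtend hχc (ι s) = χ s := congrFun (stoneCechExtend_extends hχc) s
      have he2 : stoneCechExtend hχc (ι t) = χ t := congrFun (stoneCechExtend_extends hχc) t
      rw [h] at he1
      rw [he1] at he2
      simp only [hχ, decide_eq_decide] at he2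
      exact hne (he2.mp trivial).symm
    refine ⟨A, inferInstance, ι, ρb, inferInstance, inferInstance, hinj,
      denseRange_stoneCechUnit, ?_, hρbc, ?_, ?_⟩
    · ext a
      constructor
      · rintro ⟨s, rfl⟩; exact hopen s
      · intro ha
        obtain ⟨s, hs⟩ := denseRange_stoneCechUnit.exists_mem_open ha ⟨a, rfl⟩
        exact ⟨s, hs⟩
    · intro s
      have key : ρb (ι s) = u (f s).2 (f s).1 := by
        show u (F (ι s)).2 (F (ι s)).1 = u (f s).2 (f s).1
        rw [hFext]
      rw [key]
      apply List.ext_getElem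
      · simp only [hu, hf, List.length_ofFn, List.length_map]
        have := h1 s; omega
      · intro i hi1 hi2
        simp only [hu, hf, List.getElem_ofFn, List.getElem_map, Fin.castLE]
        rw [List.getD_eq_getElem]
    · intro a
      refine ⟨?_, ?_⟩
      · simp [hρb, hu]
      · simp only [hρb, hu, List.length_ofFn]
        exact (F a).2.2
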